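/- Let $(w_n)_{n\ge1}$ be a strictly increasing sequence in $(0,1)$ with $w_n\to1$, and let $(\rho_n)$ be positive reals with $\sum_{k\ge1}\epsilon_k<\infty$. Then for every $n\ge1$ and all real numbers $u,v$ with $0<v\le u\le t_n$, one has $P_h(u)-P_h(v) \;\ge\; \frac{1}{\pi}\left(\epsilon_n\,\frac{3(u-v)}{100\,t_n^2} \;-\; \frac{1}{v}\sum_{k>n}\epsilon_k\right)$. -/

import Mathlib

open Filter MeasureTheory

/-- `t_k := (1 - w_k²)/(1 + w_k²)`. -/
noncomputable def tseq (w : ℕ → ℝ) (k : ℕ) : ℝ := (1 - w k ^ 2) / (1 + w k ^ 2)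

/-- `ε_k := ((1 - w_k)/(1 - w_{k+1})) ρ_k`. -/
noncomputable def epsseq (w ρ : ℕ → ℝ) (k : ℕ) : ℝ := (1 - w k) / (1 - w (k + 1)) * ρ k

/-- `h := ∑_{k≥1} (ε_k/t_k) 1_{[2t_k, 3t_k]}`. -/
noncomputable def hfun (w ρ : ℕ → ℝ) (x : ℝ) : ℝ :=
  ∑' k : ℕ, Set.indicator (Set.Icc (2 * tseq w (k + 1)) (3 * tseq w (k + 1)))
    (fun _ => epsseq w ρ (k + 1) / tseq w (k + 1)) x

/-- `P_h(y) := (1/π) ∫_ℝ y/(y² + x²) h(x) dx`, the Poisson integral of `h` for the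
upper half-plane evaluated at `iy`. -/
noncomputable def Ph (w ρ : ℕ → ℝ) (y : ℝ) : ℝ :=
  (1 / Real.pi) * ∫ x : ℝ, y / (y ^ 2 + x ^ 2) * hfun w ρ x

namespace PoissonAux

lemma tpos {w : ℕ → ℝ} (hw : ∀ n, w n ∈ Set.Ioo (0:ℝ) 1) (k : ℕ) : 0 < tseq w k := by
  obtain ⟨h0, h1⟩ := hw k
  have h2 : w k ^ 2 < 1 := by nlinarith
  exact div_pos (by linarith) (by positivity)

lemma tanti {w : ℕ → ℝ} (hm : StrictMono w) (hw : ∀ n, w n ∈ Set.Ioo (0:ℝ) 1) :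
    Antitone (tseq w) := by
  apply antitone_nat_of_succ_le
  intro k
  obtain ⟨ha0, ha1⟩ := hw k
  obtain ⟨hb0, hb1⟩ := hw (k+1)
  have hab : w k < w (k+1) := hm (Nat.lt_succ_self k)
  have hsq : w k ^ 2 < w (k+1) ^ 2 := by nlinarith
  unfold tseq
  rw [div_le_div_iff₀ (by positivity) (by positivity)]
  nlinarith

lemma epspos {w ρ : ℕ → ℝ} (hw : ∀ n, w n ∈ Set.Ioo (0:ℝ) 1) (hρ : ∀ n, 0 < ρ n) (k : ℕ) :
    0 < epsseq w ρ k := by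
  have h1 : w k < 1 := (hw k).2
  have h2 : w (k+1) < 1 := (hw (k+1)).2
  exact mul_pos (div_pos (by linarith) (by linarith)) (hρ k)

/-- Monotonicity of the Poisson kernel in `y` for `y ≤ x`. -/
lemma g_mono {u v x : ℝ} (hv : 0 < v) (hvu : v ≤ u) (hux : u ≤ x) :
    v / (v^2 + x^2) ≤ u / (u^2 + x^2) := by
  have hu : 0 < u := lt_of_lt_of_le hv hvu
  rw [div_le_div_iff₀ (by positivity) (by positivity)]
  nlinarith [mul_nonneg (sub_nonneg.2 hvu) (sub_nonneg.2 (show u*v ≤ x^2 by nlinarith))]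

/-- Quantitative gap on `[2t, 3t]`. -/
lemma g_gap {u v x t : ℝ} (ht : 0 < t) (hv : 0 < v) (hvu : v ≤ u) (hut : u ≤ t)
    (hx1 : 2*t ≤ x) (hx2 : x ≤ 3*t) :
    3*(u-v)/(100*t^2) ≤ u/(u^2+x^2) - v/(v^2+x^2) := by
  have hu : 0 < u := lt_of_lt_of_le hv hvu
  have heq : u/(u^2+x^2) - v/(v^2+x^2) = (u-v)*(x^2 - u*v) / ((u^2+x^2)*(v^2+x^2)) := by
    field_simp
    ring
  rw [heq, div_le_div_iff₀ (by positivity) (by positivity)]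
  have huv : (0:ℝ) ≤ u - v := by linarith
  have hA : u^2 + x^2 ≤ 10*t^2 := by nlinarith
  have hB : v^2 + x^2 ≤ 10*t^2 := by nlinarith
  have hC : 3*t^2 ≤ x^2 - u*v := by nlinarith
  have hAB : (u^2+x^2)*(v^2+x^2) ≤ 100*t^4 := by nlinarith
  nlinarith [mul_le_mul_of_nonneg_left hAB huv,
    mul_le_mul_of_nonneg_left hC (mul_nonneg (by positivity : (0:ℝ) ≤ 100*t^2) huv)]

lemma g_le {y x : ℝ} (hy : 0 < y) : y / (y^2 + x^2) ≤ 1 / y := by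
  rw [div_le_div_iff₀ (by positivity) hy]
  nlinarith [sq_nonneg x]

lemma g_nonneg {y x : ℝ} (hy : 0 < y) : 0 ≤ y / (y^2 + x^2) := by positivity

lemma g_cont {y : ℝ} (hy : 0 < y) (c : ℝ) :
    Continuous (fun x : ℝ => y / (y^2 + x^2) * c) := by
  apply Continuous.mul _ continuous_const
  exact continuous_const.div (by continuity) (fun x => by positivity)

end PoissonAux

section Main

open PoissonAux

variable {w ρ : ℕ → ℝ}

/-- the intervals -/
noncomputable def sset (w : ℕ → ℝ) (k : ℕ) : Set ℝ :=
  Set.Icc (2 * tseq w (k + 1)) (3 * tseq w (k + 1))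

/-- the coefficients -/
noncomputable def cseq (w ρ : ℕ → ℝ) (k : ℕ) : ℝ := epsseq w ρ (k + 1) / tseq w (k + 1)

lemma volume_sset (hw : ∀ n, w n ∈ Set.Ioo (0:ℝ) 1) (k : ℕ) :
    volume (sset w k) = ENNReal.ofReal (tseq w (k+1)) := by
  have ht := tpos hw (k+1)
  rw [sset, Real.volume_Icc]
  congr 1
  ring

lemma ctpos (hw : ∀ n, w n ∈ Set.Ioo (0:ℝ) 1) (hρ : ∀ n, 0 < ρ n) (k : ℕ) :
    0 < cseq w ρ k :=
  div_pos (epspos hw hρ (k+1)) (tpos hw (k+1))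

lemma ct_eq (hw : ∀ n, w n ∈ Set.Ioo (0:ℝ) 1) (k : ℕ) :
    cseq w ρ k * tseq w (k+1) = epsseq w ρ (k+1) := by
  have ht := tpos hw (k+1)
  rw [cseq]
  field_simp

lemma eps_tail_summable (hsum : Summable (fun k : ℕ => epsseq w ρ k)) (m : ℕ) :
    Summable (fun k : ℕ => epsseq w ρ (m + k)) := by
  have := (summable_nat_add_iff (f := fun k => epsseq w ρ k) m).2 hsum
  exact this.congr (fun k => by rw [Nat.add_comm])

/-- The Poisson integral of `h` as a sum of interval integrals. -/
lemma Ph_eq (hw : ∀ n, w n ∈ Set.Ioo (0:ℝ) 1) (hρ : ∀ n, 0 < ρ n)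
    (hsum : Summable (fun k : ℕ => epsseq w ρ k)) {y : ℝ} (hy : 0 < y) :
    Ph w ρ y = (1 / Real.pi) *
      ∑' k : ℕ, ∫ x in sset w k, y / (y ^ 2 + x ^ 2) * cseq w ρ k := by
  have hF : ∀ k : ℕ, (fun x : ℝ => y / (y ^ 2 + x ^ 2) *
      Set.indicator (sset w k) (fun _ => cseq w ρ k) x)
      = Set.indicator (sset w k) (fun x => y / (y ^ 2 + x ^ 2) * cseq w ρ k) := by
    intro k
    funext x
    by_cases hx : x ∈ sset w k
    · simp [Set.indicator_of_mem hx]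
    · simp [Set.indicator_of_notMem hx]
  have hmeas : ∀ k : ℕ, AEStronglyMeasurable (fun x : ℝ => y / (y ^ 2 + x ^ 2) *
      Set.indicator (sset w k) (fun _ => cseq w ρ k) x) volume := by
    intro k
    rw [hF k]
    exact ((g_cont hy (cseq w ρ k)).measurable.indicator measurableSet_Icc).aestronglyMeasurable
  have hbound : ∀ k : ℕ, (∫⁻ x, ‖y / (y ^ 2 + x ^ 2) *
      Set.indicator (sset w k) (fun _ => cseq w ρ k) x‖₊ ∂volume)
      ≤ ENNReal.ofReal (epsseq w ρ (k+1) / y) := by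
    intro k
    have ht := tpos hw (k+1)
    have hc := ctpos hw hρ k
    have step1 : (∫⁻ x, ‖y / (y ^ 2 + x ^ 2) *
        Set.indicator (sset w k) (fun _ => cseq w ρ k) x‖₊ ∂volume)
        ≤ ∫⁻ x, Set.indicator (sset w k) (fun _ => ENNReal.ofReal (cseq w ρ k / y)) x ∂volume := by
      apply lintegral_mono
      intro x
      dsimp only
      by_cases hx : x ∈ sset w k
      · rw [Set.indicator_of_mem hx, Set.indicator_of_mem hx]
        rw [← enorm_eq_nnnorm, ← ofReal_norm]
        apply ENNReal.ofReal_le_ofReal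
        have h1 : 0 ≤ y / (y^2 + x^2) := g_nonneg hy
        rw [Real.norm_eq_abs, abs_of_nonneg (by positivity)]
        calc y / (y^2 + x^2) * cseq w ρ k ≤ (1/y) * cseq w ρ k :=
              mul_le_mul_of_nonneg_right (g_le hy) (le_of_lt hc)
          _ = cseq w ρ k / y := by ring
      · rw [Set.indicator_of_notMem hx, Set.indicator_of_notMem hx]
        simp
    calc (∫⁻ x, ‖y / (y ^ 2 + x ^ 2) *
        Set.indicator (sset w k) (fun _ => cseq w ρ k) x‖₊ ∂volume)
        ≤ ∫⁻ x, Set.indicator (sset w k) (fun _ => ENNReal.ofReal (cseq w ρ k / y)) x ∂volume :=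
          step1
      _ = ENNReal.ofReal (cseq w ρ k / y) * volume (sset w k) :=
          lintegral_indicator_const (show MeasurableSet (sset w k) from measurableSet_Icc) _
      _ = ENNReal.ofReal (cseq w ρ k / y) * ENNReal.ofReal (tseq w (k+1)) := by
          rw [volume_sset hw]
      _ = ENNReal.ofReal (cseq w ρ k / y * tseq w (k+1)) := by
          rw [← ENNReal.ofReal_mul (by positivity)]
      _ = ENNReal.ofReal (epsseq w ρ (k+1) / y) := by
          congr 1
          rw [div_mul_eq_mul_div, ct_eq hw]
  have hsum' : Summable (fun k : ℕ => epsseq w ρ (k+1) / y) := by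
    have := eps_tail_summable hsum 1
    exact (this.congr (fun k => by rw [Nat.add_comm])).div_const y
  have htop : (∑' k : ℕ, ∫⁻ x, ‖y / (y ^ 2 + x ^ 2) *
      Set.indicator (sset w k) (fun _ => cseq w ρ k) x‖₊ ∂volume) ≠ ⊤ := by
    apply ne_top_of_le_ne_top _ (ENNReal.tsum_le_tsum hbound)
    rw [← ENNReal.ofReal_tsum_of_nonneg
      (fun k => le_of_lt (div_pos (epspos hw hρ (k+1)) hy)) hsum']
    exact ENNReal.ofReal_ne_top
  rw [Ph]
  congr 1
  have key : (fun x : ℝ => y / (y ^ 2 + x ^ 2) * hfun w ρ x)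
      = fun x : ℝ => ∑' k : ℕ, y / (y ^ 2 + x ^ 2) *
        Set.indicator (sset w k) (fun _ => cseq w ρ k) x := by
    funext x
    rw [hfun, tsum_mul_left]
    rfl
  rw [key, integral_tsum hmeas htop]
  congr 1
  funext k
  rw [hF k, integral_indicator (show MeasurableSet (sset w k) from measurableSet_Icc)]

end Main

/-- Main intermediate estimate in the proof of Lemma 3.3: for `n ≥ 1` and
`0 < v ≤ u ≤ tₙ`, one has
`P_h(u) - P_h(v) ≥ (1/π)(εₙ · 3(u-v)/(100 tₙ²) - (1/v) ∑_{k>n} ε_k)`. -/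
theorem poisson_integral_difference_lower_bound
    (w ρ : ℕ → ℝ) (hw_mono : StrictMono w) (hw_mem : ∀ n, w n ∈ Set.Ioo (0 : ℝ) 1)
    (hw_lim : Tendsto w atTop (nhds 1))
    (hρ : ∀ n, 0 < ρ n)
    (hsum : Summable (fun k : ℕ => epsseq w ρ k)) :
    ∀ n : ℕ, 1 ≤ n → ∀ u v : ℝ, 0 < v → v ≤ u → u ≤ tseq w n →
      (1 / Real.pi) * (epsseq w ρ n * (3 * (u - v)) / (100 * tseq w n ^ 2)
          - (1 / v) * ∑' k : ℕ, epsseq w ρ (n + 1 + k))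
        ≤ Ph w ρ u - Ph w ρ v := by
  intro n hn u v hv hvu hut
  have hu : 0 < u := lt_of_lt_of_le hv hvu
  have htn : 0 < tseq w n := PoissonAux.tpos hw_mem n
  have hmeass : ∀ k, MeasurableSet (sset w k) := fun k => measurableSet_Icc
  have hcpos : ∀ k, 0 < cseq w ρ k := ctpos hw_mem hρ
  have htpos : ∀ k, 0 < tseq w k := PoissonAux.tpos hw_mem
  have hepspos : ∀ k, 0 < epsseq w ρ k := PoissonAux.epspos hw_mem hρ
  obtain ⟨A, hAdef⟩ : ∃ A : ℝ → ℕ → ℝ,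
      A = fun y k => ∫ x in sset w k, y / (y ^ 2 + x ^ 2) * cseq w ρ k := ⟨_, rfl⟩
  have hA : ∀ y k, A y k = ∫ x in sset w k, y / (y ^ 2 + x ^ 2) * cseq w ρ k :=
    fun y k => by rw [hAdef]
  have hti : ∀ (y : ℝ), 0 < y → ∀ k,
      IntegrableOn (fun x => y / (y ^ 2 + x ^ 2) * cseq w ρ k) (sset w k) volume := by
    intro y hy k
    exact (PoissonAux.g_cont hy (cseq w ρ k)).integrableOn_Icc
  have hvol : ∀ k, volume (sset w k) < ⊤ := by
    intro k
    rw [volume_sset hw_mem]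
    exact ENNReal.ofReal_lt_top
  have hconst_int : ∀ (C : ℝ) (k : ℕ), IntegrableOn (fun _ : ℝ => C) (sset w k) volume :=
    fun C k => integrableOn_const (hvol k).ne
  have hsetconst : ∀ (C : ℝ) (k : ℕ), (∫ _ in sset w k, C) = tseq w (k+1) * C := by
    intro C k
    rw [setIntegral_const, Measure.real, volume_sset hw_mem,
      ENNReal.toReal_ofReal (le_of_lt (htpos (k+1))), smul_eq_mul]
  have hdint : ∀ k, IntegrableOn
      (fun x => u / (u ^ 2 + x ^ 2) * cseq w ρ k - v / (v ^ 2 + x ^ 2) * cseq w ρ k)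
      (sset w k) volume := fun k => (hti u hu k).sub (hti v hv k)
  have hd_eq : ∀ k, A u k - A v k
      = ∫ x in sset w k,
        (u / (u ^ 2 + x ^ 2) * cseq w ρ k - v / (v ^ 2 + x ^ 2) * cseq w ρ k) := by
    intro k
    rw [hA, hA, ← integral_sub (hti u hu k) (hti v hv k)]
  -- summability of A y
  have hs1 : Summable (fun k => epsseq w ρ (k+1)) :=
    (eps_tail_summable hsum 1).congr (fun k => by rw [Nat.add_comm])
  have hAbd : ∀ (y : ℝ), 0 < y → ∀ k, ‖A y k‖ ≤ epsseq w ρ (k+1) / y := by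
    intro y hy k
    rw [hA]
    have hb : ∀ x ∈ sset w k, ‖y / (y ^ 2 + x ^ 2) * cseq w ρ k‖ ≤ (1/y) * cseq w ρ k := by
      intro x _
      rw [Real.norm_eq_abs, abs_of_nonneg
        (mul_nonneg (PoissonAux.g_nonneg hy) (hcpos k).le)]
      exact mul_le_mul_of_nonneg_right (PoissonAux.g_le hy) (hcpos k).le
    have := norm_setIntegral_le_of_norm_le_const (hvol k) hb
    rw [Measure.real, volume_sset hw_mem, ENNReal.toReal_ofReal (htpos (k+1)).le] at this
    calc ‖∫ x in sset w k, y / (y ^ 2 + x ^ 2) * cseq w ρ k‖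
        ≤ 1 / y * cseq w ρ k * tseq w (k+1) := this
      _ = epsseq w ρ (k+1) / y := by
          rw [mul_assoc, ct_eq hw_mem k]
          ring
  have hAsum : ∀ (y : ℝ), 0 < y → Summable (fun k => A y k) := by
    intro y hy
    exact Summable.of_norm_bounded (hs1.div_const y) (hAbd y hy)
  have hdsum : Summable (fun k => A u k - A v k) := (hAsum u hu).sub (hAsum v hv)
  -- per-index lower bounds
  have hkey1 : ∀ k, k + 1 ≤ n → 0 ≤ A u k - A v k := by
    intro k hk
    rw [hd_eq k]
    apply setIntegral_nonneg (hmeass k)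
    intro x hx
    have hx1 : 2 * tseq w (k+1) ≤ x := hx.1
    have htle : tseq w n ≤ tseq w (k+1) := PoissonAux.tanti hw_mono hw_mem hk
    have hux : u ≤ x := by linarith [htpos (k+1)]
    have := PoissonAux.g_mono hv hvu hux
    nlinarith [hcpos k]
  have hkeyn : epsseq w ρ n * (3 * (u - v)) / (100 * tseq w n ^ 2) ≤ A u (n-1) - A v (n-1) := by
    have hidx : n - 1 + 1 = n := Nat.succ_pred_eq_of_pos hn
    have hcval : cseq w ρ (n-1) = epsseq w ρ n / tseq w n := by
      rw [cseq, hidx]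
    have hle : ∀ x ∈ sset w (n-1),
        (3 * (u - v) / (100 * tseq w n ^ 2)) * cseq w ρ (n-1)
          ≤ u / (u ^ 2 + x ^ 2) * cseq w ρ (n-1) - v / (v ^ 2 + x ^ 2) * cseq w ρ (n-1) := by
      intro x hx
      have hx1 : 2 * tseq w (n-1+1) ≤ x := hx.1
      have hx2 : x ≤ 3 * tseq w (n-1+1) := hx.2
      rw [hidx] at hx1 hx2
      have hgap := PoissonAux.g_gap htn hv hvu hut hx1 hx2
      calc (3 * (u - v) / (100 * tseq w n ^ 2)) * cseq w ρ (n-1)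
          ≤ (u / (u ^ 2 + x ^ 2) - v / (v ^ 2 + x ^ 2)) * cseq w ρ (n-1) :=
            mul_le_mul_of_nonneg_right hgap (hcpos (n-1)).le
        _ = u / (u ^ 2 + x ^ 2) * cseq w ρ (n-1) - v / (v ^ 2 + x ^ 2) * cseq w ρ (n-1) := by
            ring
    have hmono := setIntegral_mono_on (hconst_int _ _) (hdint (n-1)) (hmeass (n-1)) hle
    rw [hsetconst, hidx] at hmono
    rw [hd_eq]
    have htne : tseq w n ≠ 0 := ne_of_gt htn
    calc epsseq w ρ n * (3 * (u - v)) / (100 * tseq w n ^ 2)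
        = tseq w n * (3 * (u - v) / (100 * tseq w n ^ 2) * (epsseq w ρ n / tseq w n)) := by
          field_simp
      _ = tseq w n * (3 * (u - v) / (100 * tseq w n ^ 2) * cseq w ρ (n-1)) := by
          rw [hcval]
      _ ≤ _ := hmono
  have hkeytail : ∀ k, n ≤ k → -(1/v) * epsseq w ρ (k+1) ≤ A u k - A v k := by
    intro k _
    rw [hd_eq k]
    have hle : ∀ x ∈ sset w k,
        (-(1/v) * cseq w ρ k)
          ≤ u / (u ^ 2 + x ^ 2) * cseq w ρ k - v / (v ^ 2 + x ^ 2) * cseq w ρ k := by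
      intro x _
      have h1 : v / (v ^ 2 + x ^ 2) ≤ 1 / v := PoissonAux.g_le hv
      have h2 : (0:ℝ) ≤ u / (u ^ 2 + x ^ 2) := PoissonAux.g_nonneg hu
      calc -(1/v) * cseq w ρ k
          ≤ (u / (u ^ 2 + x ^ 2) - v / (v ^ 2 + x ^ 2)) * cseq w ρ k := by
            apply mul_le_mul_of_nonneg_right _ (hcpos k).le
            linarith
        _ = u / (u ^ 2 + x ^ 2) * cseq w ρ k - v / (v ^ 2 + x ^ 2) * cseq w ρ k := by ring
    have hmono := setIntegral_mono_on (hconst_int _ _) (hdint k) (hmeass k) hle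
    rw [hsetconst] at hmono
    calc -(1/v) * epsseq w ρ (k+1)
        = tseq w (k+1) * (-(1/v) * cseq w ρ k) := by
          rw [← ct_eq (ρ := ρ) hw_mem k]
          ring
      _ ≤ _ := hmono
  -- assemble
  have hPh : Ph w ρ u - Ph w ρ v = (1 / Real.pi) * ∑' k, (A u k - A v k) := by
    rw [Ph_eq hw_mem hρ hsum hu, Ph_eq hw_mem hρ hsum hv, ← mul_sub]
    congr 1
    have e1 : (∑' k : ℕ, ∫ x in sset w k, u / (u ^ 2 + x ^ 2) * cseq w ρ k) = ∑' k, A u k :=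
      tsum_congr (fun k => (hA u k).symm)
    have e2 : (∑' k : ℕ, ∫ x in sset w k, v / (v ^ 2 + x ^ 2) * cseq w ρ k) = ∑' k, A v k :=
      tsum_congr (fun k => (hA v k).symm)
    rw [e1, e2, ← Summable.tsum_sub (hAsum u hu) (hAsum v hv)]
  have hsplit := Summable.sum_add_tsum_nat_add (f := fun k => A u k - A v k) n hdsum
  have hhead : epsseq w ρ n * (3 * (u - v)) / (100 * tseq w n ^ 2)
      ≤ ∑ i ∈ Finset.range n, (A u i - A v i) := by
    have hmem : n - 1 ∈ Finset.range n := by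
      simp only [Finset.mem_range]
      omega
    have := Finset.single_le_sum (f := fun i => A u i - A v i)
      (fun i hi => hkey1 i (by simp only [Finset.mem_range] at hi; omega)) hmem
    linarith [hkeyn]
  have hsummTail : Summable (fun i => A u (i + n) - A v (i + n)) :=
    (summable_nat_add_iff n).2 hdsum
  have hsummEps : Summable (fun k => epsseq w ρ (n + 1 + k)) := eps_tail_summable hsum (n+1)
  have htail : -(1/v) * ∑' k, epsseq w ρ (n + 1 + k) ≤ ∑' i, (A u (i + n) - A v (i + n)) := by
    have h1 : ∑' k, -(1/v) * epsseq w ρ (n + 1 + k) ≤ ∑' i, (A u (i + n) - A v (i + n)) := by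
      apply Summable.tsum_le_tsum _ (hsummEps.mul_left _) hsummTail
      intro k
      have hb := hkeytail (k + n) (by omega)
      have hidx2 : k + n + 1 = n + 1 + k := by omega
      rw [hidx2] at hb
      exact hb
    rw [tsum_mul_left] at h1
    exact h1
  rw [hPh, ← hsplit]
  have hπ : (0:ℝ) ≤ 1 / Real.pi := by positivity
  apply mul_le_mul_of_nonneg_left _ hπ
  linarith [hhead, htail]
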